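/- (Gauss curvature of the middle surface of two equally curved pseudospherical surfaces.) Let I₁₁, I₁₂, I₂₂, II₁₁, κ, ξ be real numbers with Δ := I₁₁I₂₂ − I₁₂² > 0, II₁₁ ≠ 0, ξ ≠ 0 and 1 + ξ ≠ 0. Define Ī₁₁ := ((1+ξ)²/4)·I₁₁, Ī₁₂ := ((1+ξ)²/(4ξ))·I₁₂, Ī₂₂ := ((1+ξ)²/(4ξ²))·I₂₂, ĪI₁₁ := ((1+ξ)/2)·II₁₁, ĪI₁₂ := 0, and ĪI₂₂ := −((1+ξ)/(2ξ))·κ²Δ/II₁₁. Then Ī₁₁Ī₂₂ − Ī₁₂² = ((1+ξ)⁴/(16ξ²))·Δ > 0 and (ĪI₁₁ĪI₂₂ − ĪI₁₂²)/(Ī₁₁Ī₂₂ − Ī₁₂²) = −4κ²ξ/(1+ξ)². -/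
import Mathlib


/-- **Gauss curvature of the middle surface of two equally curved pseudospherical
surfaces.** With `Ī`, `ĪI` as induced from Peterson coordinates, one has
`det Ī = ((1+ξ)⁴/(16ξ²))Δ > 0` and `det ĪI / det Ī = −4κ²ξ/(1+ξ)²`. -/
theorem middle_surface_gauss_curvature
    (I₁₁ I₁₂ I₂₂ II₁₁ κ ξ : ℝ)
    (Δ : ℝ) (hΔdef : Δ = I₁₁ * I₂₂ - I₁₂ ^ 2) (hΔ : 0 < Δ)
    (hII : II₁₁ ≠ 0) (hξ : ξ ≠ 0) (hξ1 : 1 + ξ ≠ 0)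
    (Ib₁₁ Ib₁₂ Ib₂₂ IIb₁₁ IIb₁₂ IIb₂₂ : ℝ)
    (hIb11 : Ib₁₁ = (1 + ξ) ^ 2 / 4 * I₁₁)
    (hIb12 : Ib₁₂ = (1 + ξ) ^ 2 / (4 * ξ) * I₁₂)
    (hIb22 : Ib₂₂ = (1 + ξ) ^ 2 / (4 * ξ ^ 2) * I₂₂)
    (hIIb11 : IIb₁₁ = (1 + ξ) / 2 * II₁₁)
    (hIIb12 : IIb₁₂ = 0)
    (hIIb22 : IIb₂₂ = -((1 + ξ) / (2 * ξ)) * κ ^ 2 * Δ / II₁₁) :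
    (Ib₁₁ * Ib₂₂ - Ib₁₂ ^ 2 = (1 + ξ) ^ 4 / (16 * ξ ^ 2) * Δ
      ∧ 0 < Ib₁₁ * Ib₂₂ - Ib₁₂ ^ 2)
    ∧ (IIb₁₁ * IIb₂₂ - IIb₁₂ ^ 2) / (Ib₁₁ * Ib₂₂ - Ib₁₂ ^ 2)
        = -4 * κ ^ 2 * ξ / (1 + ξ) ^ 2 := by

  subst hIb11 hIb12 hIb22 hIIb11 hIIb12 hIIb22 hΔdef
  have hdet : (1 + ξ) ^ 2 / 4 * I₁₁ * ((1 + ξ) ^ 2 / (4 * ξ ^ 2) * I₂₂) -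
      ((1 + ξ) ^ 2 / (4 * ξ) * I₁₂) ^ 2
      = (1 + ξ) ^ 4 / (16 * ξ ^ 2) * (I₁₁ * I₂₂ - I₁₂ ^ 2) := by
    field_simp
    ring
  have hpos : 0 < (1 + ξ) ^ 4 / (16 * ξ ^ 2) * (I₁₁ * I₂₂ - I₁₂ ^ 2) := by
    apply mul_pos _ hΔ
    positivity
  refine ⟨⟨hdet, hdet ▸ hpos⟩, ?_⟩
  rw [hdet]
  rw [div_eq_div_iff (by exact ne_of_gt hpos) (by positivity)]
  field_simp
  ring
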